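/- Let G be a finite graph with a regular rooted tree decomposition (T,bag), let s,t ∈ V(G) and S ⊆ V(G), and set Ŝ = S ∪ {s,t}. Let z be a strict ancestor of y in T, assume Ŝ ∩ (comp(z) \ cone(y)) = ∅, and let Π_y be a semi-correct profile at y. Let J be the graph with vertex set D(y) ∪ adh(z) whose edge set is the union of Π_y and the edge set of torso(z,y), and let Π_z be the set of unordered pairs {a,b} of distinct elements of D(z) such that a and b are connected in J − S (the graph J with the vertices of S removed). Then Π_z is a semi-correct profile at z. -/

import Mathlib

/-- A finite rooted tree, encoded by its parent function. -/
structure RTree (ι : Type*) where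
  root : ι
  parent : ι → ι
  parent_root : parent root = root
  reaches_root : ∀ x : ι, ∃ n : ℕ, parent^[n] x = root

namespace RTree

variable {ι : Type*} (T : RTree ι)

/-- `T.Anc x y` means `x` is an ancestor of `y` (every node is its own ancestor). -/
def Anc (x y : ι) : Prop := ∃ n : ℕ, T.parent^[n] y = x

/-- `T.IsChild y x` means `y` is a child of `x`. -/
def IsChild (y x : ι) : Prop := y ≠ T.root ∧ T.parent y = x

/-- The underlying undirected graph of the rooted tree. -/
def treeGraph : SimpleGraph ι where
  Adj x y := x ≠ y ∧ (T.IsChild x y ∨ T.IsChild y x)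
  symm := ⟨fun x y h => ⟨h.1.symm, h.2.symm⟩⟩
  loopless := ⟨fun x h => h.1 rfl⟩

end RTree

/-- Two vertices are connected by a walk all of whose vertices lie in `U`. -/
def ConnIn {V : Type*} (G : SimpleGraph V) (U : Set V) (a b : V) : Prop :=
  ∃ p : G.Walk a b, ∀ w ∈ p.support, w ∈ U

theorem ConnIn.symm {V : Type*} {G : SimpleGraph V} {U : Set V} {a b : V}
    (h : ConnIn G U a b) : ConnIn G U b a := by
  obtain ⟨p, hp⟩ := h
  refine ⟨p.reverse, fun w hw => hp w ?_⟩
  rwa [SimpleGraph.Walk.support_reverse, List.mem_reverse] at hw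

/-- `X` is `(q,k)`-unbreakable in the induced subgraph `G[U]`: for every separation `(A,B)`
of `G[U]` of order at most `k`, one of the two sides contains at most `q` vertices of `X`. -/
def UnbreakableIn {V : Type*} (G : SimpleGraph V) (U X : Set V) (q k : ℕ) : Prop :=
  ∀ A B : Set V, A ⊆ U → B ⊆ U → A ∪ B = U →
    (∀ a ∈ A \ B, ∀ b ∈ B \ A, ¬ G.Adj a b) →
    (A ∩ B).ncard ≤ k →
    (A ∩ X).ncard ≤ q ∨ (B ∩ X).ncard ≤ q

/-- A rooted tree decomposition of the graph `G`, with nodes indexed by `ι`. -/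
structure TreeDecomp {V : Type*} (G : SimpleGraph V) (ι : Type*) extends RTree ι where
  bag : ι → Set V
  /-- (T1) for every vertex, the set of nodes whose bag contains it
  is a nonempty subtree of the tree. -/
  bag_subtree : ∀ u : V, ((toRTree.treeGraph).induce {x : ι | u ∈ bag x}).Connected
  /-- (T2) every edge is contained in some bag. -/
  bag_edge : ∀ u v : V, G.Adj u v → ∃ x : ι, u ∈ bag x ∧ v ∈ bag x

namespace TreeDecomp

variable {V ι : Type*} {G : SimpleGraph V} (D : TreeDecomp G ι)

/-- The adhesion of a node: intersection of its bag with the bag of its parent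
(empty at the root). -/
def adh (x : ι) : Set V :=
  {v : V | x ≠ D.root ∧ v ∈ D.bag (D.parent x) ∧ v ∈ D.bag x}

/-- The margin of a node. -/
def mrg (x : ι) : Set V := D.bag x \ D.adh x

/-- The cone at a node: union of the bags at all its descendants. -/
def cone (x : ι) : Set V := {v : V | ∃ y : ι, D.toRTree.Anc x y ∧ v ∈ D.bag y}

/-- The component at a node. -/
def comp (x : ι) : Set V := D.cone x \ D.adh x

/-- A tree decomposition is regular if every non-root node has nonempty margin,
connected component, and every adhesion vertex has a neighbour in the component. -/
def Regular : Prop :=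
  ∀ x : ι, x ≠ D.root →
    (D.mrg x).Nonempty ∧
    (G.induce (D.comp x)).Connected ∧
    ∀ u ∈ D.adh x, ∃ w ∈ D.comp x, G.Adj u w

end TreeDecomp

/-- Adjacency in the torso of `X` in the induced subgraph `G[U]`:
`a, b ∈ X` are adjacent iff `G[U]` contains an `a`–`b` path whose internal vertices
all avoid `X`. -/
def TorsoAdj {V : Type*} (G : SimpleGraph V) (U X : Set V) (a b : V) : Prop :=
  a ≠ b ∧ a ∈ X ∧ b ∈ X ∧
    ∃ p : G.Walk a b, (∀ w ∈ p.support, w ∈ U) ∧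
      (∀ w ∈ p.support, w ≠ a → w ≠ b → w ∉ X)

namespace TreeDecomp

variable {V ι : Type*} {G : SimpleGraph V} (D : TreeDecomp G ι)

/-- `D(x) = adh(x) ∪ ({s,t} ∩ cone(x))`. -/
def Dset (s t : V) (x : ι) : Set V := D.adh x ∪ ({s, t} ∩ D.cone x)

end TreeDecomp

namespace TreeDecomp

variable {V ι : Type*} {G : SimpleGraph V} (D : TreeDecomp G ι)

/-- A semi-correct profile at `x` (with respect to `s`, `t` and the failed set `S`):
a set of unordered pairs of distinct elements of `D(x)` containing every pair connected
by an `S`-avoiding path in `G[cone(x)]`, all of whose pairs are connected by an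
`S`-avoiding path in `G`. -/
def SemiCorrectProfile (s t : V) (S : Set V) (x : ι) (P : Set (Sym2 V)) : Prop :=
  (∀ a b : V, s(a, b) ∈ P → a ≠ b ∧ a ∈ D.Dset s t x ∧ b ∈ D.Dset s t x) ∧
  (∀ a b : V, a ≠ b → a ∈ D.Dset s t x → b ∈ D.Dset s t x →
      ConnIn G (D.cone x \ S) a b → s(a, b) ∈ P) ∧
  (∀ a b : V, s(a, b) ∈ P → ConnIn G Sᶜ a b)

end TreeDecomp


section Stmt14Aux

open SimpleGraph

namespace RTree

variable {ι : Type*} (T : RTree ι)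

lemma anc_refl (x : ι) : T.Anc x x := ⟨0, rfl⟩

lemma iter_root (n : ℕ) : T.parent^[n] T.root = T.root := by
  induction n with
  | zero => rfl
  | succ k ih => rw [Function.iterate_succ_apply, T.parent_root, ih]

lemma anc_trans {x y z : ι} (h1 : T.Anc x y) (h2 : T.Anc y z) : T.Anc x z := by
  obtain ⟨n, hn⟩ := h1; obtain ⟨m, hm⟩ := h2
  exact ⟨n + m, by rw [Function.iterate_add_apply, hm, hn]⟩

lemma ne_root_of_strict {z y : ι} (h : T.Anc z y) (hzy : z ≠ y) : y ≠ T.root := by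
  intro hy
  obtain ⟨n, hn⟩ := h
  subst hy
  rw [T.iter_root] at hn
  exact hzy hn.symm

lemma not_anc_rev {z y : ι} (h : T.Anc z y) (hzy : z ≠ y) : ¬ T.Anc y z := by
  rintro ⟨m, hm⟩
  obtain ⟨n, hn⟩ := h
  have hmn : m + n ≠ 0 := by
    rintro h0
    have : m = 0 ∧ n = 0 := by omega
    obtain ⟨h1, h2⟩ := this
    subst h1 h2
    exact hzy (by simpa using hn.symm)
  have hcyc : ∀ k : ℕ, T.parent^[k * (m + n)] y = y := by
    intro k
    induction k with
    | zero => simp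
    | succ j ih =>
      have : (j + 1) * (m + n) = j * (m + n) + (m + n) := by ring
      rw [this, Function.iterate_add_apply, Function.iterate_add_apply, hn, hm, ih]
  obtain ⟨N, hN⟩ := T.reaches_root y
  have hge : N ≤ N * (m + n) := Nat.le_mul_of_pos_right N (by omega)
  have hroot : y = T.root := by
    have h1 : T.parent^[N * (m + n)] y = y := hcyc N
    have h2 : T.parent^[N * (m + n)] y = T.parent^[N * (m + n) - N] (T.parent^[N] y) := by
      rw [← Function.iterate_add_apply]
      congr 1
      omega
    rw [h1, hN, T.iter_root] at h2
    exact h2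
  have : z = T.root := by rw [← hn, hroot, T.iter_root]
  exact hzy (this.trans hroot.symm)

end RTree

namespace TreeDecomp

variable {V ι : Type*} {G : SimpleGraph V} (D : TreeDecomp G ι)

lemma adh_subset_bag (x : ι) : D.adh x ⊆ D.bag x := fun _ hv => hv.2.2

lemma bag_subset_cone (x : ι) : D.bag x ⊆ D.cone x :=
  fun _ hv => ⟨x, D.toRTree.anc_refl x, hv⟩

lemma cone_mono {z y : ι} (h : D.toRTree.Anc z y) : D.cone y ⊆ D.cone z := by
  rintro v ⟨x, hx, hv⟩
  exact ⟨x, D.toRTree.anc_trans h hx, hv⟩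

lemma cross {y x₁ x₂ : ι} {u : V} (hy : y ≠ D.root)
    (h1 : D.toRTree.Anc y x₁) (h2 : ¬ D.toRTree.Anc y x₂)
    (hb1 : u ∈ D.bag x₁) (hb2 : u ∈ D.bag x₂) : u ∈ D.adh y := by
  have hconn := D.bag_subtree u
  have hreach := hconn.preconnected ⟨x₁, hb1⟩ ⟨x₂, hb2⟩
  obtain ⟨W⟩ := hreach
  have key : ∀ (c d : {x : ι | u ∈ D.bag x})
      (_ : ((D.toRTree.treeGraph).induce {x : ι | u ∈ D.bag x}).Walk c d),
      D.toRTree.Anc y c.1 → ¬ D.toRTree.Anc y d.1 →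
      u ∈ D.bag y ∧ u ∈ D.bag (D.parent y) := by
    intro c d W
    induction W with
    | nil => intro hc hd; exact absurd hc hd
    | @cons c e d hadj W ih =>
      intro hc hd
      by_cases he : D.toRTree.Anc y e.1
      · exact ih he hd
      · have hA : D.toRTree.treeGraph.Adj c.1 e.1 := hadj
        obtain ⟨hne, hch⟩ := hA
        rcases hch with ⟨hcr, hcp⟩ | ⟨her, hep⟩
        · -- parent c.1 = e.1
          obtain ⟨n, hn⟩ := hc
          cases n with
          | zero =>
            simp only [Function.iterate_zero, id] at hn
            refine ⟨by rw [← hn]; exact c.2, ?_⟩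
            rw [← hn, hcp]
            exact e.2
          | succ k =>
            exact absurd ⟨k, by rw [← hn, Function.iterate_succ_apply, hcp]⟩ he
        · -- parent e.1 = c.1
          obtain ⟨n, hn⟩ := hc
          exact absurd ⟨n + 1, by rw [Function.iterate_succ_apply, hep, hn]⟩ he
  obtain ⟨hby, hbp⟩ := key ⟨x₁, hb1⟩ ⟨x₂, hb2⟩ W h1 h2
  exact ⟨hy, hbp, hby⟩

lemma sep {y : ι} (hy : y ≠ D.root) {u v : V}
    (hu : u ∈ D.comp y) (huv : G.Adj u v) : v ∈ D.cone y := by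
  obtain ⟨x, hux, hvx⟩ := D.bag_edge u v huv
  by_cases hx : D.toRTree.Anc y x
  · exact ⟨x, hx, hvx⟩
  · obtain ⟨x₁, hx₁, hux₁⟩ := hu.1
    exact absurd (D.cross hy hx₁ hx hux₁ hux) hu.2

end TreeDecomp

theorem ConnIn.trans {V : Type*} {G : SimpleGraph V} {U : Set V} {a b c : V}
    (h1 : ConnIn G U a b) (h2 : ConnIn G U b c) : ConnIn G U a c := by
  obtain ⟨p, hp⟩ := h1; obtain ⟨q, hq⟩ := h2
  refine ⟨p.append q, fun w hw => ?_⟩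
  rw [SimpleGraph.Walk.support_append] at hw
  rcases List.mem_append.mp hw with h | h
  · exact hp _ h
  · exact hq _ (List.mem_of_mem_tail h)

end Stmt14Aux

/-- Let `z` be a strict ancestor of `y` with `Ŝ = S ∪ {s,t}` avoiding
`comp(z) \ cone(y)`, let `Π_y` be a semi-correct profile at `y`, and let `J` be the graph
on `D(y) ∪ adh(z)` whose edges are the pairs of `Π_y` together with the edges of
`torso(z,y)`. Then the set `Π_z` of pairs of distinct elements of `D(z)` connected in
`J − S` is a semi-correct profile at `z`. -/
theorem stmt14 {V ι : Type*} [Fintype V] [Fintype ι] {G : SimpleGraph V}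
    (D : TreeDecomp G ι) (hreg : D.Regular)
    (s t : V) (S : Set V)
    (z y : ι) (hanc : D.toRTree.Anc z y) (hzy : z ≠ y)
    (hdisj : Disjoint (S ∪ {s, t}) (D.comp z \ D.cone y))
    (Py : Set (Sym2 V)) (hPy : D.SemiCorrectProfile s t S y Py)
    (J : SimpleGraph V)
    (hJ : ∀ a b : V, J.Adj a b ↔ a ≠ b ∧
        (s(a, b) ∈ Py ∨ TorsoAdj G (D.cone z \ D.comp y) (D.adh z ∪ D.adh y) a b)) :
    D.SemiCorrectProfile s t S z
      {e : Sym2 V | ∃ a b : V, e = s(a, b) ∧ a ≠ b ∧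
        a ∈ D.Dset s t z ∧ b ∈ D.Dset s t z ∧ ConnIn J Sᶜ a b} := by
  classical
  obtain ⟨hPy1, hPy2, hPy3⟩ := hPy
  have hy : y ≠ D.root := D.toRTree.ne_root_of_strict hanc hzy
  have hna : ¬ D.toRTree.Anc y z := D.toRTree.not_anc_rev hanc hzy
  set X : Set V := D.adh z ∪ D.adh y with hXdef
  set Y : Set V := D.adh z ∪ D.Dset s t y with hYdef
  have hXY : X ⊆ Y := by
    rintro v (hv | hv)
    · exact Or.inl hv
    · exact Or.inr (Or.inl hv)
  have hconeYZ : D.cone y ⊆ D.cone z := D.cone_mono hanc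
  have hYcone : Y ⊆ D.cone z := by
    rintro v (hv | hv | hv)
    · exact D.bag_subset_cone z (D.adh_subset_bag z hv)
    · exact hconeYZ (D.bag_subset_cone y (D.adh_subset_bag y hv))
    · exact hconeYZ hv.2
  have hAZY : ∀ v, v ∈ D.adh z → v ∈ D.cone y → v ∈ D.adh y := by
    intro v hvz hvy
    obtain ⟨x₁, hx₁, hb₁⟩ := hvy
    exact D.cross hy hx₁ hna hb₁ hvz.2.2
  have hYD : ∀ v, v ∈ Y → v ∈ D.cone y → v ∈ D.Dset s t y := by
    rintro v (hv | hv) hvy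
    · exact Or.inl (hAZY v hv hvy)
    · exact hv
  have hYX : ∀ v, v ∈ Y → v ∉ D.comp y → v ∈ X := by
    rintro v (hv | hv | hv) hvc
    · exact Or.inl hv
    · exact Or.inr hv
    · by_contra hvX
      exact hvc ⟨hv.2, fun h => hvX (Or.inr h)⟩
  have hScomp : ∀ v, v ∈ D.comp z → v ∉ D.cone y → v ∉ S := by
    intro v h1 h2 hS
    exact Set.disjoint_left.mp hdisj (Set.mem_union_left _ hS) ⟨h1, h2⟩
  -- chain lemma on the `comp y` side
  have chain1 : ∀ (a v : V) (q : G.Walk a v), q.support.Nodup → a ∈ D.comp y →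
      (∀ w ∈ q.support, w ≠ v → w ∉ X ∧ w ∉ S ∧ w ∈ D.cone z) →
      (∀ w ∈ q.support, w = v ∨ w ∈ D.comp y) ∧ v ∈ D.cone y := by
    intro a v q
    induction q with
    | nil =>
      intro _ ha _
      refine ⟨?_, ha.1⟩
      intro w hw
      simp only [SimpleGraph.Walk.support_nil, List.mem_singleton] at hw
      subst hw; exact Or.inl rfl
    | @cons a a' v hadj q ih =>
      intro hnd ha hcond
      rw [SimpleGraph.Walk.support_cons] at hnd
      have hnd' : q.support.Nodup := hnd.of_cons
      by_cases ha' : a' = v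
      · subst ha'
        have hqnil : q = SimpleGraph.Walk.nil :=
          (SimpleGraph.Walk.isPath_iff_eq_nil (p := q)) |>.mp ((SimpleGraph.Walk.isPath_def q).mpr hnd')
        subst hqnil
        refine ⟨?_, D.sep hy ha hadj⟩
        intro w hw
        simp only [SimpleGraph.Walk.support_cons, SimpleGraph.Walk.support_nil,
          List.mem_cons, List.mem_singleton] at hw
        rcases hw with rfl | rfl | h
        · exact Or.inr ha
        · exact Or.inl rfl
        · exact absurd h (List.not_mem_nil)
      · have ha'mem : a' ∈ (SimpleGraph.Walk.cons hadj q).support := by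
          rw [SimpleGraph.Walk.support_cons]
          exact List.mem_cons_of_mem _ q.start_mem_support
        obtain ⟨hX', hS', hcz'⟩ := hcond a' ha'mem ha'
        have h1 : a' ∈ D.cone y := D.sep hy ha hadj
        have h2 : a' ∈ D.comp y := ⟨h1, fun h => hX' (Or.inr h)⟩
        obtain ⟨hall, hv⟩ := ih hnd' h2 (fun w hw hwv =>
          hcond w (by rw [SimpleGraph.Walk.support_cons]; exact List.mem_cons_of_mem _ hw) hwv)
        refine ⟨?_, hv⟩
        intro w hw
        rw [SimpleGraph.Walk.support_cons] at hw
        rcases List.mem_cons.mp hw with rfl | hw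
        · exact Or.inr ha
        · exact hall w hw
  -- chain lemma on the `comp z \ cone y` side
  have chain2 : ∀ (a v : V) (q : G.Walk a v), q.support.Nodup → a ∈ D.comp z → a ∉ D.cone y →
      (∀ w ∈ q.support, w ≠ v → w ∉ X ∧ w ∉ S ∧ w ∈ D.cone z) →
      (∀ w ∈ q.support, w = v ∨ w ∉ D.cone y) ∧ v ∉ D.comp y := by
    intro a v q
    induction q with
    | nil =>
      intro _ _ ha _
      refine ⟨?_, fun h => ha h.1⟩
      intro w hw
      simp only [SimpleGraph.Walk.support_nil, List.mem_singleton] at hw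
      subst hw; exact Or.inl rfl
    | @cons a a' v hadj q ih =>
      intro hnd haz hay hcond
      rw [SimpleGraph.Walk.support_cons] at hnd
      have hnd' : q.support.Nodup := hnd.of_cons
      by_cases ha' : a' = v
      · subst ha'
        have hqnil : q = SimpleGraph.Walk.nil :=
          (SimpleGraph.Walk.isPath_iff_eq_nil (p := q)) |>.mp ((SimpleGraph.Walk.isPath_def q).mpr hnd')
        subst hqnil
        refine ⟨?_, fun hvc => hay (D.sep hy hvc hadj.symm)⟩
        intro w hw
        simp only [SimpleGraph.Walk.support_cons, SimpleGraph.Walk.support_nil,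
          List.mem_cons, List.mem_singleton] at hw
        rcases hw with rfl | rfl | h
        · exact Or.inr hay
        · exact Or.inl rfl
        · exact absurd h (List.not_mem_nil)
      · have ha'mem : a' ∈ (SimpleGraph.Walk.cons hadj q).support := by
          rw [SimpleGraph.Walk.support_cons]
          exact List.mem_cons_of_mem _ q.start_mem_support
        obtain ⟨hX', hS', hcz'⟩ := hcond a' ha'mem ha'
        have h1 : a' ∉ D.cone y := by
          intro h
          have h2 : a' ∈ D.comp y := ⟨h, fun hh => hX' (Or.inr hh)⟩
          exact hay (D.sep hy h2 hadj.symm)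
        have h2 : a' ∈ D.comp z := ⟨hcz', fun hh => hX' (Or.inl hh)⟩
        obtain ⟨hall, hv⟩ := ih hnd' h2 h1 (fun w hw hwv =>
          hcond w (by rw [SimpleGraph.Walk.support_cons]; exact List.mem_cons_of_mem _ hw) hwv)
        refine ⟨?_, hv⟩
        intro w hw
        rw [SimpleGraph.Walk.support_cons] at hw
        rcases List.mem_cons.mp hw with rfl | hw
        · exact Or.inr hay
        · exact hall w hw
  -- helper: a single G-edge between suitable vertices gives a J-edge
  have edgeCase : ∀ (u v : V), G.Adj u v → u ∈ D.cone z → v ∈ D.cone z →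
      u ∉ S → v ∉ S → u ∈ Y → v ∈ Y → ConnIn J Sᶜ u v := by
    intro u v hadj hucz hvcz huS hvS hu hv
    have hedge : J.Adj u v := by
      by_cases hcy : u ∈ D.comp y ∨ v ∈ D.comp y
      · have hboth : u ∈ D.cone y ∧ v ∈ D.cone y := by
          rcases hcy with h | h
          · exact ⟨h.1, D.sep hy h hadj⟩
          · exact ⟨D.sep hy h hadj.symm, h.1⟩
        have hPmem : s(u, v) ∈ Py := by
          refine hPy2 u v hadj.ne (hYD u hu hboth.1) (hYD v hv hboth.2)
            ⟨SimpleGraph.Walk.cons hadj SimpleGraph.Walk.nil, ?_⟩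
          intro w' hw'
          simp only [SimpleGraph.Walk.support_cons, SimpleGraph.Walk.support_nil,
            List.mem_cons, List.mem_singleton] at hw'
          rcases hw' with rfl | rfl | h
          · exact ⟨hboth.1, huS⟩
          · exact ⟨hboth.2, hvS⟩
          · exact absurd h (List.not_mem_nil)
        exact (hJ u v).mpr ⟨hadj.ne, Or.inl hPmem⟩
      · push_neg at hcy
        have hXu := hYX u hu hcy.1
        have hXv := hYX v hv hcy.2
        refine (hJ u v).mpr ⟨hadj.ne, Or.inr ⟨hadj.ne, hXu, hXv,
          SimpleGraph.Walk.cons hadj SimpleGraph.Walk.nil, ?_, ?_⟩⟩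
        · intro w' hw'
          simp only [SimpleGraph.Walk.support_cons, SimpleGraph.Walk.support_nil,
            List.mem_cons, List.mem_singleton] at hw'
          rcases hw' with rfl | rfl | h
          · exact ⟨hucz, hcy.1⟩
          · exact ⟨hvcz, hcy.2⟩
          · exact absurd h (List.not_mem_nil)
        · intro w' hw' hw'u hw'v
          simp only [SimpleGraph.Walk.support_cons, SimpleGraph.Walk.support_nil,
            List.mem_cons, List.mem_singleton] at hw'
          rcases hw' with rfl | rfl | h
          · exact absurd rfl hw'u
          · exact absurd rfl hw'v
          · exact absurd h (List.not_mem_nil)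
    refine ⟨SimpleGraph.Walk.cons hedge SimpleGraph.Walk.nil, ?_⟩
    intro w' hw'
    simp only [SimpleGraph.Walk.support_cons, SimpleGraph.Walk.support_nil,
      List.mem_cons, List.mem_singleton] at hw'
    rcases hw' with rfl | rfl | h
    · exact huS
    · exact hvS
    · exact absurd h (List.not_mem_nil)
  -- helper: walk with at least two edges, internal vertices avoiding X
  have longCase : ∀ (u w v : V) (hadj : G.Adj u w) (qq : G.Walk w v), ¬ qq.Nil →
      (u :: qq.support).Nodup →
      (∀ w' ∈ u :: qq.support, w' ∈ D.cone z \ S) → u ∈ Y → v ∈ Y →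
      (∀ w' ∈ u :: qq.support, w' ≠ u → w' ≠ v → w' ∉ X) → ConnIn J Sᶜ u v := by
    intro u w v hadj qq hnn hndall hsupp hu hv hint
    have hndq : qq.support.Nodup := hndall.of_cons
    have hunq : u ∉ qq.support := (List.nodup_cons.mp hndall).1
    have hvqq : v ∈ qq.support := qq.end_mem_support
    have hwqq : w ∈ qq.support := qq.start_mem_support
    have huw : u ≠ w := fun h => hunq (h ▸ hwqq)
    have huv : u ≠ v := fun h => hunq (h ▸ hvqq)
    have hwv : w ≠ v := by
      intro h
      subst h
      have hqe : qq = SimpleGraph.Walk.nil :=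
        (SimpleGraph.Walk.isPath_iff_eq_nil (p := qq)).mp ((SimpleGraph.Walk.isPath_def qq).mpr hndq)
      exact hnn (hqe ▸ SimpleGraph.Walk.Nil.nil)
    have hwsup : w ∈ u :: qq.support := List.mem_cons_of_mem _ hwqq
    have hwX : w ∉ X := hint w hwsup (Ne.symm huw) hwv
    have hwcz : w ∈ D.cone z := (hsupp w hwsup).1
    have hwcompz : w ∈ D.comp z := ⟨hwcz, fun h => hwX (Or.inl h)⟩
    have huS : u ∉ S := (hsupp u (List.mem_cons_self)).2
    have hvS : v ∉ S := (hsupp v (List.mem_cons_of_mem _ hvqq)).2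
    have hcondq : ∀ w' ∈ qq.support, w' ≠ v → w' ∉ X ∧ w' ∉ S ∧ w' ∈ D.cone z := by
      intro w' hw' hw'v
      have hw'p : w' ∈ u :: qq.support := List.mem_cons_of_mem _ hw'
      have hw'u : w' ≠ u := fun h => hunq (h ▸ hw')
      exact ⟨hint w' hw'p hw'u hw'v, (hsupp w' hw'p).2, (hsupp w' hw'p).1⟩
    by_cases hwy : w ∈ D.cone y
    · have hwc : w ∈ D.comp y := ⟨hwy, fun h => hwX (Or.inr h)⟩
      obtain ⟨hall, hvy⟩ := chain1 w v qq hndq hwc hcondq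
      have huy : u ∈ D.cone y := D.sep hy hwc hadj.symm
      have hPmem : s(u, v) ∈ Py := by
        refine hPy2 u v huv (hYD u hu huy) (hYD v hv hvy)
          ⟨SimpleGraph.Walk.cons hadj qq, ?_⟩
        intro w' hw'
        rw [SimpleGraph.Walk.support_cons] at hw'
        rcases List.mem_cons.mp hw' with rfl | hw'
        · exact ⟨huy, huS⟩
        · rcases hall w' hw' with rfl | hcy
          · exact ⟨hvy, hvS⟩
          · exact ⟨hcy.1, (hsupp w' (List.mem_cons_of_mem _ hw')).2⟩
      have hedge : J.Adj u v := (hJ u v).mpr ⟨huv, Or.inl hPmem⟩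
      refine ⟨SimpleGraph.Walk.cons hedge SimpleGraph.Walk.nil, ?_⟩
      intro w' hw'
      simp only [SimpleGraph.Walk.support_cons, SimpleGraph.Walk.support_nil,
        List.mem_cons, List.mem_singleton] at hw'
      rcases hw' with rfl | rfl | h
      · exact huS
      · exact hvS
      · exact absurd h (List.not_mem_nil)
    · obtain ⟨hall, hvnc⟩ := chain2 w v qq hndq hwcompz hwy hcondq
      have hunc : u ∉ D.comp y := fun h => hwy (D.sep hy h hadj)
      have hXu := hYX u hu hunc
      have hXv := hYX v hv hvnc
      have htorso : TorsoAdj G (D.cone z \ D.comp y) X u v := by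
        refine ⟨huv, hXu, hXv, SimpleGraph.Walk.cons hadj qq, ?_, ?_⟩
        · intro w' hw'
          rw [SimpleGraph.Walk.support_cons] at hw'
          rcases List.mem_cons.mp hw' with rfl | hw'
          · exact ⟨(hsupp w' (List.mem_cons_self)).1, hunc⟩
          · have hw'cz : w' ∈ D.cone z := (hsupp w' (List.mem_cons_of_mem _ hw')).1
            rcases hall w' hw' with rfl | hncy
            · exact ⟨hw'cz, hvnc⟩
            · exact ⟨hw'cz, fun h => hncy h.1⟩
        · intro w' hw' h1 h2
          rw [SimpleGraph.Walk.support_cons] at hw'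
          exact hint w' hw' h1 h2
      have hedge : J.Adj u v := (hJ u v).mpr ⟨huv, Or.inr htorso⟩
      refine ⟨SimpleGraph.Walk.cons hedge SimpleGraph.Walk.nil, ?_⟩
      intro w' hw'
      simp only [SimpleGraph.Walk.support_cons, SimpleGraph.Walk.support_nil,
        List.mem_cons, List.mem_singleton] at hw'
      rcases hw' with rfl | rfl | h
      · exact huS
      · exact hvS
      · exact absurd h (List.not_mem_nil)
  -- Lemma A: paths whose internal vertices avoid X give J-connectivity
  have lemA : ∀ (u v : V) (p : G.Walk u v), p.IsPath →
      (∀ w ∈ p.support, w ∈ D.cone z \ S) → u ∈ Y → v ∈ Y →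
      (∀ w ∈ p.support, w ≠ u → w ≠ v → w ∉ X) → ConnIn J Sᶜ u v := by
    intro u v p
    cases p with
    | nil =>
      intro _ hsupp _ _ _
      refine ⟨SimpleGraph.Walk.nil, ?_⟩
      intro w' hw'
      simp only [SimpleGraph.Walk.support_nil, List.mem_singleton] at hw'
      subst hw'
      exact (hsupp _ (by simp)).2
    | cons hadj q =>
      intro hpath hsupp hu hv hint
      rw [SimpleGraph.Walk.support_cons] at hsupp hint
      have hnd := hpath.support_nodup
      rw [SimpleGraph.Walk.support_cons] at hnd
      by_cases hnn : q.Nil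
      · obtain rfl := hnn.eq
        exact edgeCase _ _ hadj
          (hsupp _ (List.mem_cons_self)).1
          (hsupp _ (List.mem_cons_of_mem _ q.end_mem_support)).1
          (hsupp _ (List.mem_cons_self)).2
          (hsupp _ (List.mem_cons_of_mem _ q.end_mem_support)).2
          hu hv
      · exact longCase _ _ _ hadj q hnn hnd hsupp hu hv hint
  -- Lemma B: any S-avoiding walk in G[cone z] between vertices of Y gives J-connectivity
  have lemB : ∀ (n : ℕ) (u v : V) (p : G.Walk u v), p.length ≤ n →
      (∀ w ∈ p.support, w ∈ D.cone z \ S) → u ∈ Y → v ∈ Y → ConnIn J Sᶜ u v := by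
    intro n
    induction n using Nat.strong_induction_on with
    | _ n ih =>
      intro u v p hlen hsupp hu hv
      by_cases hint : ∀ w ∈ p.support, w ≠ u → w ≠ v → w ∉ X
      · exact lemA u v p.bypass p.bypass_isPath
          (fun w hw => hsupp w (p.support_bypass_subset hw)) hu hv
          (fun w hw hwu hwv => hint w (p.support_bypass_subset hw) hwu hwv)
      · push_neg at hint
        obtain ⟨w, hwmem, hwu, hwv, hwX⟩ := hint
        have hwY : w ∈ Y := hXY hwX
        have hspec := p.take_spec hwmem
        have hlen12 : (p.takeUntil w hwmem).length + (p.dropUntil w hwmem).length = p.length := by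
          conv_rhs => rw [← hspec]
          rw [SimpleGraph.Walk.length_append]
        have h1pos : 1 ≤ (p.takeUntil w hwmem).length := by
          by_contra h
          have h0 : (p.takeUntil w hwmem).length = 0 := by omega
          exact SimpleGraph.Walk.not_nil_of_ne (Ne.symm hwu)
            (SimpleGraph.Walk.nil_iff_length_eq.mpr h0)
        have h2pos : 1 ≤ (p.dropUntil w hwmem).length := by
          by_contra h
          have h0 : (p.dropUntil w hwmem).length = 0 := by omega
          exact SimpleGraph.Walk.not_nil_of_ne hwv
            (SimpleGraph.Walk.nil_iff_length_eq.mpr h0)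
        have c1 : ConnIn J Sᶜ u w :=
          ih (p.takeUntil w hwmem).length (by omega) u w (p.takeUntil w hwmem) le_rfl
            (fun w' hw' => hsupp w' (p.support_takeUntil_subset hwmem hw')) hu hwY
        have c2 : ConnIn J Sᶜ w v :=
          ih (p.dropUntil w hwmem).length (by omega) w v (p.dropUntil w hwmem) le_rfl
            (fun w' hw' => hsupp w' (p.support_dropUntil_subset hwmem hw')) hwY hv
        exact c1.trans c2
  have hDzY : D.Dset s t z ⊆ Y := by
    rintro v (hv | hv)
    · exact Or.inl hv
    · by_cases h : v ∈ D.adh z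
      · exact Or.inl h
      · have hvc : v ∈ D.comp z := ⟨hv.2, h⟩
        have hvy : v ∈ D.cone y := by
          by_contra hvy
          exact Set.disjoint_left.mp hdisj (Set.mem_union_right _ hv.1) ⟨hvc, hvy⟩
        exact Or.inr (Or.inr ⟨hv.1, hvy⟩)
  refine ⟨?_, ?_, ?_⟩
  · rintro a b ⟨a', b', heq, hne, ha', hb', -⟩
    rcases Sym2.eq_iff.mp heq with ⟨rfl, rfl⟩ | ⟨rfl, rfl⟩
    · exact ⟨hne, ha', hb'⟩
    · exact ⟨hne.symm, hb', ha'⟩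
  · intro a b hab haD hbD hconn
    obtain ⟨p, hp⟩ := hconn
    exact ⟨a, b, rfl, hab, haD, hbD, lemB p.length a b p le_rfl hp (hDzY haD) (hDzY hbD)⟩
  · rintro a b ⟨a', b', heq, -, -, -, hc⟩
    have key : ∀ (u v : V) (q : J.Walk u v), (∀ w ∈ q.support, w ∈ Sᶜ) → ConnIn G Sᶜ u v := by
      intro u v q
      induction q with
      | nil =>
        intro h
        refine ⟨SimpleGraph.Walk.nil, ?_⟩
        intro w' hw'
        simp only [SimpleGraph.Walk.support_nil, List.mem_singleton] at hw'
        subst hw'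
        exact h _ (SimpleGraph.Walk.start_mem_support _)
      | @cons u u' v hadj q ih =>
        intro h
        have h1 : ConnIn G Sᶜ u u' := by
          obtain ⟨hne, hcase⟩ := (hJ u u').mp hadj
          rcases hcase with hm | ⟨_, hXu, hXv, pw, hp1, hp2⟩
          · exact hPy3 u u' hm
          · refine ⟨pw, fun w hw => ?_⟩
            by_cases hwu : w = u
            · subst hwu; exact h w (by simp)
            by_cases hwu' : w = u'
            · subst hwu'
              exact h w (by
                rw [SimpleGraph.Walk.support_cons]
                exact List.mem_cons_of_mem _ q.start_mem_support)
            · have hwX := hp2 w hw hwu hwu'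
              have hw1 := hp1 w hw
              have hwcz : w ∈ D.comp z := ⟨hw1.1, fun hh => hwX (Or.inl hh)⟩
              have hwny : w ∉ D.cone y := by
                intro hh
                exact hwX (Or.inr (by
                  by_contra hadhy
                  exact hw1.2 ⟨hh, hadhy⟩))
              exact hScomp w hwcz hwny
        exact h1.trans (ih fun w hw =>
          h w (by rw [SimpleGraph.Walk.support_cons]; exact List.mem_cons_of_mem _ hw))
    obtain ⟨q, hq⟩ := hc
    have hgc := key a' b' q hq
    rcases Sym2.eq_iff.mp heq with ⟨rfl, rfl⟩ | ⟨rfl, rfl⟩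
    · exact hgc
    · exact hgc.symm
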